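/- Let P be a k×k real matrix such that no complex eigenvalue λ of P has −λ also an eigenvalue of P (σ(P) ∩ (−σ(P)) = ∅, where σ denotes the set of complex eigenvalues). Let q_{−P}(x) = Σ_{ℓ=0}^{k} a_ℓ x^ℓ, with a_k = 1, be the characteristic polynomial of −P. Then for every k×k real matrix C, the matrix q_{−P}(Pᵗ) is invertible, the Lyapunov equation Pᵗ X + X P = C admits a unique k×k real solution X, and this solution is given by X = (q_{−P}(Pᵗ))⁻¹ · Σ_{ℓ=1}^{k} a_ℓ Σ_{i=0}^{ℓ−1} (−1)^i (Pᵗ)^{ℓ−1−i} C P^i. -/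

import Mathlib

open Matrix

lemma lyap_eval_charpoly {n R : Type*} [Fintype n] [DecidableEq n] [CommRing R]
    (M : Matrix n n R) (r : R) :
    (M.charpoly).eval r = (Matrix.scalar n r - M).det := by
  rw [Matrix.charpoly, _root_.eval_det, matPolyEquiv_charmatrix]
  simp

lemma lyap_mem_spectrum {n K : Type*} [Fintype n] [DecidableEq n] [Field K]
    (M : Matrix n n K) (μ : K) :
    μ ∈ spectrum K M ↔ (M.charpoly).eval μ = 0 := by
  rw [spectrum.mem_iff, Matrix.isUnit_iff_isUnit_det, isUnit_iff_ne_zero, not_not,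
    lyap_eval_charpoly]
  have : (algebraMap K (Matrix n n K)) μ = Matrix.scalar n μ := by
    rw [Matrix.scalar_apply, Matrix.algebraMap_eq_diagonal]; rfl
  rw [this]

lemma lyap_spectrum_transpose {n K : Type*} [Fintype n] [DecidableEq n] [Field K]
    (M : Matrix n n K) : spectrum K Mᵀ = spectrum K M := by
  ext μ
  rw [lyap_mem_spectrum, lyap_mem_spectrum, lyap_eval_charpoly, lyap_eval_charpoly,
    ← Matrix.det_transpose (Matrix.scalar n μ - M)]
  congr! 2
  rw [Matrix.transpose_sub, Matrix.scalar_apply, Matrix.diagonal_transpose]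

lemma lyap_key {k : ℕ} (P X C : Matrix (Fin k) (Fin k) ℝ)
    (h : Pᵀ * X + X * P = C) (l : ℕ) :
    Pᵀ ^ l * X - X * (-P) ^ l =
      ∑ i ∈ Finset.range l, ((-1 : ℝ) ^ i) • (Pᵀ ^ (l - 1 - i) * C * P ^ i) := by
  induction l with
  | zero => simp
  | succ l ih =>
    have hc : (-P) ^ l * P = P * (-P) ^ l := (((Commute.refl P).neg_left).pow_left l).eq
    have hnp : (-P) ^ l = ((-1 : ℝ) ^ l) • P ^ l := by
      rw [← neg_one_smul ℝ P, _root_.smul_pow]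
    have e1 : Pᵀ ^ (l + 1) * X - X * (-P) ^ (l + 1)
        = Pᵀ * (Pᵀ ^ l * X - X * (-P) ^ l) + C * (-P) ^ l := by
      rw [← h, pow_succ, pow_succ]
      simp only [mul_sub, sub_mul, add_mul, mul_neg, neg_mul, neg_neg, mul_assoc, hc]
      rw [← mul_assoc (Pᵀ ^ l), pow_mul_comm', mul_assoc]
      abel
    rw [e1, ih, Finset.sum_range_succ, Finset.mul_sum]
    congr 1
    · refine Finset.sum_congr rfl fun i hi => ?_
      rw [Finset.mem_range] at hi
      have he : l + 1 - 1 - i = (l - 1 - i) + 1 := by omega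
      rw [he, pow_succ', mul_smul_comm, mul_assoc, mul_assoc, mul_assoc]
    · rw [hnp, mul_smul_comm]
      simp

lemma lyap_sum {k : ℕ} (P X C : Matrix (Fin k) (Fin k) ℝ)
    (h : Pᵀ * X + X * P = C) :
    (Polynomial.aeval Pᵀ (Matrix.charpoly (-P))) * X =
      ∑ l ∈ Finset.Icc 1 k, (Matrix.charpoly (-P)).coeff l •
        ∑ i ∈ Finset.range l, ((-1 : ℝ) ^ i) • (Pᵀ ^ (l - 1 - i) * C * P ^ i) := by
  have hdeg : (Matrix.charpoly (-P)).natDegree = k := by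
    simpa using Matrix.charpoly_natDegree_eq_dim (-P)
  have hz : X * Polynomial.aeval (-P) (Matrix.charpoly (-P)) = 0 := by
    rw [Matrix.aeval_self_charpoly, mul_zero]
  rw [Polynomial.aeval_eq_sum_range, hdeg] at hz ⊢
  rw [Finset.sum_mul]
  rw [Finset.mul_sum] at hz
  have hrange : Finset.range (k + 1) = insert 0 (Finset.Icc 1 k) := by
    ext x; simp only [Finset.mem_range, Finset.mem_insert, Finset.mem_Icc]; omega
  calc (∑ l ∈ Finset.range (k + 1), (Matrix.charpoly (-P)).coeff l • Pᵀ ^ l * X)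
      = ∑ l ∈ Finset.range (k + 1), (Matrix.charpoly (-P)).coeff l •
          (Pᵀ ^ l * X - X * (-P) ^ l) := by
        rw [← sub_zero (∑ l ∈ Finset.range (k + 1), (Matrix.charpoly (-P)).coeff l • Pᵀ ^ l * X),
          ← hz, ← Finset.sum_sub_distrib]
        refine Finset.sum_congr rfl fun l _ => ?_
        rw [smul_mul_assoc, mul_smul_comm, ← smul_sub]
    _ = ∑ l ∈ Finset.range (k + 1), (Matrix.charpoly (-P)).coeff l •
          ∑ i ∈ Finset.range l, ((-1 : ℝ) ^ i) • (Pᵀ ^ (l - 1 - i) * C * P ^ i) := by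
        refine Finset.sum_congr rfl fun l _ => ?_
        rw [lyap_key P X C h l]
    _ = ∑ l ∈ Finset.Icc 1 k, (Matrix.charpoly (-P)).coeff l •
          ∑ i ∈ Finset.range l, ((-1 : ℝ) ^ i) • (Pᵀ ^ (l - 1 - i) * C * P ^ i) := by
        rw [hrange, Finset.sum_insert (by simp)]
        simp

lemma lyap_isUnit {k : ℕ} (P : Matrix (Fin k) (Fin k) ℝ)
    (hσ : spectrum ℂ (P.map (algebraMap ℝ ℂ)) ∩ (-spectrum ℂ (P.map (algebraMap ℝ ℂ))) = ∅) :
    IsUnit (Polynomial.aeval Pᵀ (Matrix.charpoly (-P))) := by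
  rcases Nat.eq_zero_or_pos k with hk | hk
  · subst hk; exact isUnit_of_subsingleton _
  rw [Matrix.isUnit_iff_isUnit_det, isUnit_iff_ne_zero]
  intro hdet0
  set f := algebraMap ℝ ℂ with hf
  set A : Matrix (Fin k) (Fin k) ℂ := P.map f with hA
  set qC : Polynomial ℂ := (Matrix.charpoly (-P)).map f with hqC
  have hφ : (Polynomial.aeval Pᵀ (Matrix.charpoly (-P))).map f
      = Polynomial.aeval Aᵀ qC := by
    have := Polynomial.aeval_algHom_apply
      ((Algebra.ofId ℝ ℂ).mapMatrix : Matrix (Fin k) (Fin k) ℝ →ₐ[ℝ] Matrix (Fin k) (Fin k) ℂ)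
      Pᵀ (Matrix.charpoly (-P))
    have hco : ⇑(Algebra.ofId ℝ ℂ) = ⇑f := rfl
    simp only [AlgHom.mapMatrix_apply, hco] at this
    rw [hqC, Polynomial.aeval_map_algebraMap, ← this]
    congr 1
  have hnotunit : ¬ IsUnit (Polynomial.aeval Aᵀ qC) := by
    rw [Matrix.isUnit_iff_isUnit_det, ← hφ]
    have hd : (((Polynomial.aeval Pᵀ) (Matrix.charpoly (-P))).map ⇑f).det
        = f ((Polynomial.aeval Pᵀ) (Matrix.charpoly (-P))).det := by
      rw [← RingHom.mapMatrix_apply, ← RingHom.map_det]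
    rw [hd, hdet0, map_zero]
    exact not_isUnit_zero
  have h0 : (0 : ℂ) ∈ spectrum ℂ (Polynomial.aeval Aᵀ qC) := (spectrum.zero_mem_iff ℂ).mpr hnotunit
  have hdegpos : 0 < qC.degree := by
    rw [hqC, Polynomial.degree_map_eq_of_injective (algebraMap ℝ ℂ).injective]
    rw [Matrix.charpoly_degree_eq_dim]
    simpa using hk
  rw [spectrum.map_polynomial_aeval_of_degree_pos Aᵀ qC hdegpos] at h0
  obtain ⟨μ, hμ, hev⟩ := h0
  have hμ1 : μ ∈ spectrum ℂ A := by rwa [lyap_spectrum_transpose] at hμ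
  have hqCcp : qC = Matrix.charpoly (-A) := by
    rw [hqC, ← Matrix.charpoly_map]
    congr 1
    ext i j
    simp [hA]
  have hμ2 : μ ∈ spectrum ℂ (-A) := by
    rw [lyap_mem_spectrum, ← hqCcp]
    exact hev
  rw [← spectrum.neg_eq] at hμ2
  have : μ ∈ spectrum ℂ A ∩ (-spectrum ℂ A) := ⟨hμ1, hμ2⟩
  rw [hσ] at this
  exact this

/-- if `σ(P) ∩ (−σ(P)) = ∅` (complex eigenvalues of the real `k×k` matrix `P`),
then `q₋P(Pᵀ)` is invertible, where `q₋P` is the characteristic polynomial of `−P`, and for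
every `C` the Lyapunov equation `Pᵀ X + X P = C` has the unique solution
`X = (q₋P(Pᵀ))⁻¹ · Σ_{ℓ=1}^{k} a_ℓ Σ_{i=0}^{ℓ−1} (−1)^i (Pᵀ)^{ℓ−1−i} C P^i`. -/
theorem stmt_7 (k : ℕ) (P : Matrix (Fin k) (Fin k) ℝ)
    (hσ : spectrum ℂ (P.map (algebraMap ℝ ℂ)) ∩ (-spectrum ℂ (P.map (algebraMap ℝ ℂ))) = ∅) :
    IsUnit (Polynomial.aeval Pᵀ (Matrix.charpoly (-P))) ∧
    ∀ C X : Matrix (Fin k) (Fin k) ℝ,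
      Pᵀ * X + X * P = C ↔
        X = (Polynomial.aeval Pᵀ (Matrix.charpoly (-P)))⁻¹ *
          ∑ l ∈ Finset.Icc 1 k, (Matrix.charpoly (-P)).coeff l •
            ∑ i ∈ Finset.range l, ((-1 : ℝ) ^ i) • (Pᵀ ^ (l - 1 - i) * C * P ^ i) := by
  have hU := lyap_isUnit P hσ
  have hdet : IsUnit (Polynomial.aeval Pᵀ (Matrix.charpoly (-P))).det :=
    (Matrix.isUnit_iff_isUnit_det _).mp hU
  have fwd : ∀ C X : Matrix (Fin k) (Fin k) ℝ, Pᵀ * X + X * P = C →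
      X = (Polynomial.aeval Pᵀ (Matrix.charpoly (-P)))⁻¹ *
          ∑ l ∈ Finset.Icc 1 k, (Matrix.charpoly (-P)).coeff l •
            ∑ i ∈ Finset.range l, ((-1 : ℝ) ^ i) • (Pᵀ ^ (l - 1 - i) * C * P ^ i) := by
    intro C X h
    rw [← lyap_sum P X C h, ← mul_assoc, Matrix.nonsing_inv_mul _ hdet, one_mul]
  refine ⟨hU, fun C X => ⟨fwd C X, fun h => ?_⟩⟩
  -- existence of a solution
  let L : Matrix (Fin k) (Fin k) ℝ →ₗ[ℝ] Matrix (Fin k) (Fin k) ℝ :=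
    { toFun := fun Y => Pᵀ * Y + Y * P
      map_add' := fun Y Z => by simp [mul_add, add_mul]; abel
      map_smul' := fun c Y => by simp [mul_smul_comm, smul_mul_assoc, smul_add] }
  have hinj : Function.Injective L := by
    intro Y Z hYZ
    have hzero : Pᵀ * (Y - Z) + (Y - Z) * P = 0 := by
      simp only [L, LinearMap.coe_mk, AddHom.coe_mk] at hYZ
      rw [mul_sub, sub_mul]
      rw [sub_add_sub_comm, hYZ, sub_self]
    have hs := lyap_sum P (Y - Z) 0 hzero
    simp only [Matrix.mul_zero, Matrix.zero_mul, smul_zero, Finset.sum_const_zero] at hs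
    have : Y - Z = 0 := by
      have := congrArg (fun W => (Polynomial.aeval Pᵀ (Matrix.charpoly (-P)))⁻¹ * W) hs
      simpa [← mul_assoc, Matrix.nonsing_inv_mul _ hdet] using this
    exact sub_eq_zero.mp this
  obtain ⟨X₀, hX₀⟩ := LinearMap.injective_iff_surjective.mp hinj C
  simp only [L, LinearMap.coe_mk, AddHom.coe_mk] at hX₀
  rw [h, ← fwd C X₀ hX₀]
  exact hX₀
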